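/- Virial theorem for parabolic solutions: let q(t) be a solution of Newton's N-body equations defined for all t ∈ ℝ with total energy E = 0 and satisfying I(t) = O(t^{4/3}) as t → ±∞ (i.e., there exist constants C > 0 and T₀ > 0 with I(t) ≤ C·|t|^{4/3} for |t| ≥ T₀). Then the time averages ⟨K⟩ = lim_{T→∞} (1/(2T))∫_{−T}^{T} K(t) dt and ⟨U⟩ = lim_{T→∞} (1/(2T))∫_{−T}^{T} U(q(t)) dt exist and ⟨K⟩ = ⟨U⟩ = 0. -/

import Mathlib

open Finset Filter MeasureTheory
open scoped RealInnerProductSpace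

noncomputable section

/-- Configuration space of `N` bodies in `ℝ³`. -/
abbrev Config (N : ℕ) := Fin N → EuclideanSpace ℝ (Fin 3)

/-- A configuration is collision-free if all bodies occupy distinct positions. -/
def CollisionFree {N : ℕ} (q : Config N) : Prop :=
  ∀ a b : Fin N, a ≠ b → q a ≠ q b

/-- The Newtonian potential `U(q) = G ∑_{a<b} m_a m_b / |q_a - q_b|`. -/
def potU {N : ℕ} (G : ℝ) (m : Fin N → ℝ) (q : Config N) : ℝ :=
  G * ∑ a : Fin N, ∑ b : Fin N, if a < b then m a * m b / ‖q a - q b‖ else 0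

/-- Kinetic energy `K = (1/2) ∑_a m_a |v_a|²`. -/
def kinE {N : ℕ} (m : Fin N → ℝ) (v : Config N) : ℝ :=
  (1 / 2) * ∑ a : Fin N, m a * ‖v a‖ ^ 2

/-- Moment of inertia `I = ∑_a m_a |q_a|²`. -/
def momI {N : ℕ} (m : Fin N → ℝ) (q : Config N) : ℝ :=
  ∑ a : Fin N, m a * ‖q a‖ ^ 2

/-- `q, v : ℝ → Config N` is a solution of Newton's N-body equations on `J`:
at each time in `J` the configuration is collision-free, `v` is the derivative
of `q`, and the acceleration satisfies
`m_a q̈_a = G ∑_{b ≠ a} m_a m_b (q_b - q_a)/|q_b - q_a|³`. -/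
def IsSolutionOn {N : ℕ} (G : ℝ) (m : Fin N → ℝ) (J : Set ℝ)
    (q v : ℝ → Config N) : Prop :=
  ∀ t ∈ J,
    CollisionFree (q t) ∧
    (∀ a, HasDerivAt (fun s => q s a) (v t a) t) ∧
    (∀ a, ∃ acc : EuclideanSpace ℝ (Fin 3),
      HasDerivAt (fun s => v s a) acc t ∧
      m a • acc = ∑ b ∈ univ.filter (fun b => b ≠ a),
        (G * m a * m b / ‖q t b - q t a‖ ^ 3) • (q t b - q t a))

/-- Virial theorem for parabolic solutions: if a solution defined
for all time has zero energy and `I(t) = O(t^{4/3})` as `t → ±∞`, then the time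
averages of `K` and `U` exist and `⟨K⟩ = ⟨U⟩ = 0`. -/
lemma sum_pair_symm {N : ℕ} (w : Fin N → Fin N → ℝ) (hsym : ∀ a b, w a b = w b a) :
    ∑ a : Fin N, ∑ b ∈ univ.filter (fun b => b ≠ a), w a b
      = 2 * ∑ a : Fin N, ∑ b : Fin N, (if a < b then w a b else 0) := by
  have h1 : ∀ a : Fin N, ∑ b ∈ univ.filter (fun b => b ≠ a), w a b
      = (∑ b : Fin N, if a < b then w a b else 0)
        + (∑ b : Fin N, if b < a then w a b else 0) := by
    intro a
    rw [Finset.sum_filter, ← Finset.sum_add_distrib]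
    refine Finset.sum_congr rfl fun b _ => ?_
    rcases lt_trichotomy a b with h | h | h
    · simp [h.ne', h, not_lt.mpr h.le]
    · simp [h]
    · simp [h.ne, h, not_lt.mpr h.le]
  have h2 : (∑ a : Fin N, ∑ b : Fin N, if b < a then w a b else 0)
      = ∑ a : Fin N, ∑ b : Fin N, if a < b then w a b else 0 := by
    rw [Finset.sum_comm]
    exact Finset.sum_congr rfl fun a _ => Finset.sum_congr rfl fun b _ => by
      rw [hsym]
  simp only [h1, Finset.sum_add_distrib, h2]
  ring

lemma force_virial {N : ℕ} (G : ℝ) (m : Fin N → ℝ) (q : Config N) (hq : CollisionFree q) :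
    (∑ a : Fin N, ⟪q a, (∑ b ∈ univ.filter (fun b => b ≠ a),
        (G * m a * m b / ‖q b - q a‖ ^ 3) • (q b - q a))⟫)
      = - potU G m q := by
  set w : Fin N → Fin N → ℝ := fun a b =>
    (G * m a * m b / ‖q b - q a‖ ^ 3) * ⟪q a, q b - q a⟫ with hw
  have hLHS : (∑ a : Fin N, ⟪q a, (∑ b ∈ univ.filter (fun b => b ≠ a),
        (G * m a * m b / ‖q b - q a‖ ^ 3) • (q b - q a))⟫)
      = ∑ a : Fin N, ∑ b ∈ univ.filter (fun b => b ≠ a), w a b := by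
    refine Finset.sum_congr rfl fun a _ => ?_
    rw [inner_sum]
    exact Finset.sum_congr rfl fun b _ => real_inner_smul_right _ _ _
  rw [hLHS]
  have hpair : ∀ a b : Fin N, a ≠ b →
      w a b + w b a = -(G * (m a * m b / ‖q a - q b‖)) := by
    intro a b hab
    have hne : q a - q b ≠ 0 := sub_ne_zero.mpr (hq a b hab)
    have hr : (0:ℝ) < ‖q a - q b‖ := norm_pos_iff.mpr hne
    have hin : ⟪q a, q b - q a⟫ + ⟪q b, q a - q b⟫ = -(‖q a - q b‖ ^ 2) := by
      have e1 : ⟪q a - q b, q a - q b⟫ = ‖q a - q b‖ ^ 2 :=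
        real_inner_self_eq_norm_sq _
      simp only [inner_sub_left, inner_sub_right] at e1 ⊢
      rw [real_inner_comm (q b) (q a)] at e1 ⊢
      linarith
    have hcoef : w a b + w b a = (G * m a * m b / ‖q a - q b‖ ^ 3)
        * (⟪q a, q b - q a⟫ + ⟪q b, q a - q b⟫) := by
      rw [hw]; simp only
      rw [show ‖q b - q a‖ = ‖q a - q b‖ from norm_sub_rev _ _]
      ring
    rw [hcoef, hin]
    field_simp
  have hswap : (∑ a : Fin N, ∑ b ∈ univ.filter (fun b => b ≠ a), w a b)
      = ∑ a : Fin N, ∑ b ∈ univ.filter (fun b => b ≠ a), w b a := by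
    simp only [Finset.sum_filter]
    rw [Finset.sum_comm]
    refine Finset.sum_congr rfl fun a _ => Finset.sum_congr rfl fun b _ => ?_
    by_cases h : a = b
    · simp [h]
    · simp [h, Ne.symm h]
  have h2S : 2 * (∑ a : Fin N, ∑ b ∈ univ.filter (fun b => b ≠ a), w a b)
      = ∑ a : Fin N, ∑ b ∈ univ.filter (fun b => b ≠ a), (w a b + w b a) := by
    rw [two_mul]
    nth_rewrite 2 [hswap]
    rw [← Finset.sum_add_distrib]
    exact Finset.sum_congr rfl fun a _ => (Finset.sum_add_distrib).symm
  have h3 : (∑ a : Fin N, ∑ b ∈ univ.filter (fun b => b ≠ a), (w a b + w b a))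
      = -(G * ∑ a : Fin N, ∑ b ∈ univ.filter (fun b => b ≠ a),
          m a * m b / ‖q a - q b‖) := by
    rw [Finset.mul_sum]
    rw [← Finset.sum_neg_distrib]
    refine Finset.sum_congr rfl fun a _ => ?_
    rw [Finset.mul_sum, ← Finset.sum_neg_distrib]
    refine Finset.sum_congr rfl fun b hb => ?_
    exact hpair a b (Ne.symm (Finset.mem_filter.mp hb).2)
  have h4 : (∑ a : Fin N, ∑ b ∈ univ.filter (fun b => b ≠ a), m a * m b / ‖q a - q b‖)
      = 2 * ∑ a : Fin N, ∑ b : Fin N, (if a < b then m a * m b / ‖q a - q b‖ else 0) :=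
    sum_pair_symm _ (fun a b => by rw [norm_sub_rev]; ring)
  have : 2 * (∑ a : Fin N, ∑ b ∈ univ.filter (fun b => b ≠ a), w a b)
      = -(2 * potU G m q) := by
    rw [h2S, h3, h4, potU]; ring
  linarith

theorem virial_parabolic
    (N : ℕ) (hN : 2 ≤ N) (G : ℝ) (hG : 0 < G)
    (m : Fin N → ℝ) (hm : ∀ a, 0 < m a)
    (q v : ℝ → Config N)
    (hsol : IsSolutionOn G m Set.univ q v)
    (hE : ∀ t : ℝ, kinE m (v t) - potU G m (q t) = 0)
    (hI : ∃ C > (0:ℝ), ∃ T₀ > (0:ℝ), ∀ t : ℝ, T₀ ≤ |t| →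
      momI m (q t) ≤ C * |t| ^ ((4:ℝ) / 3)) :
    Tendsto (fun T : ℝ => (1 / (2 * T)) * ∫ t in (-T)..T, kinE m (v t))
      atTop (nhds 0) ∧
    Tendsto (fun T : ℝ => (1 / (2 * T)) * ∫ t in (-T)..T, potU G m (q t))
      atTop (nhds 0) := by
  classical
  have hq : ∀ t, CollisionFree (q t) := fun t => (hsol t trivial).1
  have hv : ∀ t a, HasDerivAt (fun s => q s a) (v t a) t := fun t => (hsol t trivial).2.1
  set A : ℝ → Config N := fun t a => ((hsol t trivial).2.2 a).choose with hAdef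
  have hA1 : ∀ t a, HasDerivAt (fun s => v s a) (A t a) t :=
    fun t a => ((hsol t trivial).2.2 a).choose_spec.1
  have hA2 : ∀ t a, m a • A t a = ∑ b ∈ univ.filter (fun b => b ≠ a),
      (G * m a * m b / ‖q t b - q t a‖ ^ 3) • (q t b - q t a) :=
    fun t a => ((hsol t trivial).2.2 a).choose_spec.2
  set K : ℝ → ℝ := fun t => kinE m (v t) with hKdef
  set Jf : ℝ → ℝ := fun t => ∑ a, (2 * m a) * ⟪q t a, v t a⟫ with hJdef
  set Iq : ℝ → ℝ := fun t => momI m (q t) with hIdef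
  have hUK : ∀ t, potU G m (q t) = K t := fun t => (sub_eq_zero.mp (hE t)).symm
  have hK0 : ∀ t, 0 ≤ K t := by
    intro t
    rw [hKdef]; unfold kinE
    exact mul_nonneg (by norm_num)
      (Finset.sum_nonneg fun a _ => mul_nonneg (hm a).le (sq_nonneg _))
  have hI0 : ∀ t, 0 ≤ Iq t := by
    intro t
    rw [hIdef]; unfold momI
    exact Finset.sum_nonneg fun a _ => mul_nonneg (hm a).le (sq_nonneg _)
  -- derivative of the moment of inertia
  have hId : ∀ t, HasDerivAt Iq (Jf t) t := by
    intro t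
    have h : HasDerivAt (fun s => ∑ a : Fin N, m a * ⟪q s a, q s a⟫)
        (∑ a : Fin N, (2 * m a) * ⟪q t a, v t a⟫) t := by
      refine HasDerivAt.fun_sum fun a _ => ?_
      have h1 := (HasDerivAt.inner ℝ (hv t a) (hv t a)).const_mul (m a)
      convert h1 using 1
      · rfl
      rw [real_inner_comm (v t a) (q t a)]
      ring
    have heq : (fun s => ∑ a : Fin N, m a * ⟪q s a, q s a⟫) = Iq := by
      funext s
      rw [hIdef]; unfold momI
      exact Finset.sum_congr rfl fun a _ => by rw [real_inner_self_eq_norm_sq]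
    rw [heq] at h
    exact h
  -- value of the force sum
  have hforce : ∀ t, (∑ a : Fin N, ⟪q t a, m a • A t a⟫) = - potU G m (q t) := by
    intro t
    have h := force_virial G m (q t) (hq t)
    rw [← h]
    exact Finset.sum_congr rfl fun a _ => by rw [hA2 t a]
  -- derivative of Jf (Lagrange–Jacobi with zero energy)
  have hJd : ∀ t, HasDerivAt Jf (2 * K t) t := by
    intro t
    have h : HasDerivAt Jf
        (∑ a : Fin N, (2 * m a) * (⟪q t a, A t a⟫ + ⟪v t a, v t a⟫)) t := by
      rw [hJdef]
      exact HasDerivAt.fun_sum fun a _ =>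
        (HasDerivAt.inner ℝ (hv t a) (hA1 t a)).const_mul _
    convert h using 1
    have term : ∀ a : Fin N, (2 * m a) * (⟪q t a, A t a⟫ + ⟪v t a, v t a⟫)
        = 2 * ⟪q t a, m a • A t a⟫ + 2 * (m a * ‖v t a‖ ^ 2) := by
      intro a
      rw [real_inner_smul_right, real_inner_self_eq_norm_sq]
      ring
    calc 2 * K t
        = 2 * (- potU G m (q t)) + 4 * K t := by rw [hUK t]; ring
      _ = 2 * (∑ a : Fin N, ⟪q t a, m a • A t a⟫)
            + 2 * ∑ a : Fin N, m a * ‖v t a‖ ^ 2 := by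
          rw [hforce t]
          have : (2:ℝ) * ∑ a : Fin N, m a * ‖v t a‖ ^ 2 = 4 * K t := by
            rw [hKdef]; unfold kinE; ring
          rw [this]
      _ = ∑ a : Fin N, (2 * m a) * (⟪q t a, A t a⟫ + ⟪v t a, v t a⟫) := by
          rw [Finset.mul_sum, Finset.mul_sum, ← Finset.sum_add_distrib]
          exact Finset.sum_congr rfl fun a _ => (term a).symm
  -- continuity
  have hqc : ∀ a, Continuous fun t => q t a :=
    fun a => continuous_iff_continuousAt.mpr fun t => (hv t a).continuousAt
  have hvc : ∀ a, Continuous fun t => v t a :=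
    fun a => continuous_iff_continuousAt.mpr fun t => (hA1 t a).continuousAt
  have hKc : Continuous K := by
    rw [hKdef]; unfold kinE
    exact continuous_const.mul (continuous_finset_sum _ fun a _ =>
      continuous_const.mul (((hvc a).norm).pow 2))
  have hJc : Continuous Jf := by
    rw [hJdef]
    exact continuous_finset_sum _ fun a _ =>
      continuous_const.mul (Continuous.inner (hqc a) (hvc a))
  -- monotonicity of Jf
  have hJmono : Monotone Jf := by
    refine monotone_of_deriv_nonneg (fun t => (hJd t).differentiableAt) fun t => ?_
    rw [(hJd t).deriv]
    exact mul_nonneg (by norm_num) (hK0 t)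
  -- FTC
  have hFTC_I : ∀ a b : ℝ, (∫ t in a..b, Jf t) = Iq b - Iq a := fun a b =>
    intervalIntegral.integral_eq_sub_of_hasDerivAt (fun x _ => hId x)
      (hJc.intervalIntegrable a b)
  have hFTC_K : ∀ a b : ℝ, (∫ t in a..b, 2 * K t) = Jf b - Jf a := fun a b =>
    intervalIntegral.integral_eq_sub_of_hasDerivAt (fun x _ => hJd x)
      ((continuous_const.mul hKc).intervalIntegrable a b)
  have hInt : ∀ T : ℝ, (∫ t in (-T)..T, K t) = (Jf T - Jf (-T)) / 2 := by
    intro T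
    have h2 : (∫ t in (-T)..T, 2 * K t) = 2 * ∫ t in (-T)..T, K t :=
      intervalIntegral.integral_const_mul 2 K
    have h3 := hFTC_K (-T) T
    rw [h2] at h3
    linarith
  obtain ⟨C, hC, T₀, hT₀, hbd⟩ := hI
  -- the key growth bound
  set g : ℝ → ℝ := fun T => C * (2*T) ^ ((4:ℝ)/3) / (2 * T^2) with hgdef
  have key : ∀ T : ℝ, max T₀ 1 ≤ T →
      0 ≤ (1 / (2 * T)) * ∫ t in (-T)..T, K t ∧
      (1 / (2 * T)) * (∫ t in (-T)..T, K t) ≤ g T := by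
    intro T hT
    have hT0T : T₀ ≤ T := le_trans (le_max_left _ _) hT
    have h1T : (1:ℝ) ≤ T := le_trans (le_max_right _ _) hT
    have hTpos : (0:ℝ) < T := lt_of_lt_of_le one_pos h1T
    -- upper bound for Jf T
    have e1 : (∫ t in T..(2*T), Jf t) = Iq (2*T) - Iq T := hFTC_I T (2*T)
    have mono1 : T * Jf T ≤ ∫ t in T..(2*T), Jf t := by
      have h : (∫ _x in T..(2*T), Jf T) ≤ ∫ x in T..(2*T), Jf x :=
        intervalIntegral.integral_mono_on (by linarith : T ≤ 2*T)
        (continuous_const.intervalIntegrable T (2*T)) (hJc.intervalIntegrable T (2*T))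
        (fun x hx => hJmono hx.1)
      rwa [intervalIntegral.integral_const, smul_eq_mul,
        show 2*T - T = T by ring] at h
    have hIub1 : Iq (2*T) ≤ C * (2*T) ^ ((4:ℝ)/3) := by
      have h := hbd (2*T) (by rw [abs_of_pos (by linarith)]; linarith)
      rwa [abs_of_pos (by linarith)] at h
    have hub : T * Jf T ≤ C * (2*T) ^ ((4:ℝ)/3) := by
      have := hI0 T
      linarith [e1 ▸ mono1]
    -- lower bound for Jf (-T)
    have e2 : (∫ t in (-(2*T))..(-T), Jf t) = Iq (-T) - Iq (-(2*T)) :=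
      hFTC_I (-(2*T)) (-T)
    have mono2 : (∫ t in (-(2*T))..(-T), Jf t) ≤ T * Jf (-T) := by
      have h : (∫ x in (-(2*T))..(-T), Jf x) ≤ ∫ _x in (-(2*T))..(-T), Jf (-T) :=
        intervalIntegral.integral_mono_on (by linarith : -(2*T) ≤ -T)
        (hJc.intervalIntegrable (-(2*T)) (-T)) (continuous_const.intervalIntegrable (-(2*T)) (-T))
        (fun x hx => hJmono hx.2)
      rwa [intervalIntegral.integral_const, smul_eq_mul,
        show -T - -(2*T) = T by ring] at h
    have hIub2 : Iq (-(2*T)) ≤ C * (2*T) ^ ((4:ℝ)/3) := by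
      have h := hbd (-(2*T)) (by rw [abs_of_nonpos (by linarith), neg_neg]; linarith)
      rwa [abs_of_nonpos (by linarith), neg_neg] at h
    have hlb : -(C * (2*T) ^ ((4:ℝ)/3)) ≤ T * Jf (-T) := by
      have := hI0 (-T)
      linarith [e2 ▸ mono2]
    -- assemble
    have hmono3 : Jf (-T) ≤ Jf T := hJmono (by linarith : -T ≤ T)
    constructor
    · refine mul_nonneg (by positivity) ?_
      rw [hInt T]; linarith
    · rw [hInt T]
      show 1 / (2 * T) * ((Jf T - Jf (-T)) / 2) ≤ C * (2*T) ^ ((4:ℝ)/3) / (2 * T^2)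
      rw [le_div_iff₀ (by positivity : (0:ℝ) < 2 * T^2)]
      have expand : 1 / (2*T) * ((Jf T - Jf (-T))/2) * (2 * T^2)
          = (T * Jf T - T * Jf (-T)) / 2 := by
        field_simp
      rw [expand]
      linarith [hub, hlb]
  -- limit of the bound
  have hglim : Tendsto g atTop (nhds 0) := by
    have h1 : Tendsto (fun T : ℝ => (C * 2 ^ ((4:ℝ)/3) / 2) * T ^ (-(2/3) : ℝ))
        atTop (nhds 0) := by
      have := (tendsto_rpow_neg_atTop (by norm_num : (0:ℝ) < 2/3)).const_mul
        (C * 2 ^ ((4:ℝ)/3) / 2)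
      simpa using this
    refine h1.congr' ?_
    filter_upwards [eventually_ge_atTop (1:ℝ)] with T hT1
    have hTpos : (0:ℝ) < T := lt_of_lt_of_le one_pos hT1
    show C * 2 ^ ((4:ℝ)/3) / 2 * T ^ (-(2/3) : ℝ) = C * (2*T) ^ ((4:ℝ)/3) / (2 * T^2)
    have hmul : (2*T) ^ ((4:ℝ)/3) = 2 ^ ((4:ℝ)/3) * T ^ ((4:ℝ)/3) :=
      Real.mul_rpow (by norm_num) hTpos.le
    have hsplit : T ^ ((4:ℝ)/3) = T^2 * T ^ (-(2/3) : ℝ) := by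
      rw [← Real.rpow_natCast T 2, ← Real.rpow_add hTpos]
      norm_num
    rw [hmul, hsplit]
    field_simp
  -- conclude
  have main : Tendsto (fun T : ℝ => (1 / (2 * T)) * ∫ t in (-T)..T, K t)
      atTop (nhds 0) := by
    refine squeeze_zero' ?_ ?_ hglim
    · filter_upwards [eventually_ge_atTop (max T₀ 1)] with T hT
      exact (key T hT).1
    · filter_upwards [eventually_ge_atTop (max T₀ 1)] with T hT
      exact (key T hT).2
  refine ⟨main, ?_⟩
  have heq : (fun T : ℝ => (1 / (2 * T)) * ∫ t in (-T)..T, potU G m (q t))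
      = fun T : ℝ => (1 / (2 * T)) * ∫ t in (-T)..T, K t := by
    funext T
    congr 1
    exact intervalIntegral.integral_congr fun t _ => hUK t
  rw [heq]
  exact main
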